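/- Let Γ be a simple graph with finite vertex set S, let A be a unital C*-algebra, and let (V_s)_{s∈S} satisfy the Toeplitz–Artin relations for Γ. Then for every finite list L of elements of A, each term of which is equal to V_s or to V_s* for some s ∈ S, either the product of L (in order) equals 0, or there exist finite sequences s_1,…,s_p and t_1,…,t_q of elements of S such that the product of L equals (V_{s_1}⋯V_{s_p})·(V_{t_1}⋯V_{t_q})* (where an empty product is interpreted as 1). -/

import Mathlib

/-- A family `(V s)` of elements of a unital C*-algebra `A` satisfies the
Toeplitz–Artin relations for a simple graph `Γ` if:
(1) each `V s` is an isometry;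
(2) `V s` commutes and *-commutes with `V t` whenever `s` and `t` are adjacent;
(3) `(V s)* (V t) = 0` whenever `s ≠ t` are non-adjacent. -/
def SatisfiesToeplitzArtin {S A : Type*} [Ring A] [StarRing A]
    (Γ : SimpleGraph S) (V : S → A) : Prop :=
  (∀ s, star (V s) * V s = 1) ∧
  (∀ s t, Γ.Adj s t → V s * V t = V t * V s) ∧
  (∀ s t, Γ.Adj s t → star (V s) * V t = V t * star (V s)) ∧
  (∀ s t, s ≠ t → ¬ Γ.Adj s t → star (V s) * V t = 0)

private lemma star_mul_word {S A : Type*} [Ring A] [StarRing A]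
    (Γ : SimpleGraph S) (V : S → A) (hTA : SatisfiesToeplitzArtin Γ V)
    (s : S) (w : List S) :
    star (V s) * (w.map V).prod = 0 ∨
      (∃ w' : List S, star (V s) * (w.map V).prod = (w'.map V).prod) ∨
      (∃ w' : List S,
        star (V s) * (w.map V).prod = (w'.map V).prod * star (V s)) := by
  obtain ⟨hiso, hcomm, hscomm, hzero⟩ := hTA
  induction w with
  | nil =>
    right; right
    exact ⟨[], by simp⟩
  | cons t w ih =>
    by_cases hst : s = t
    · subst hst
      right; left
      refine ⟨w, ?_⟩
      simp [← mul_assoc, hiso s]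
    · by_cases hadj : Γ.Adj s t
      · have key : star (V s) * ((t :: w).map V).prod
            = V t * (star (V s) * (w.map V).prod) := by
          simp [← mul_assoc, hscomm s t hadj]
        rcases ih with h0 | ⟨w', hw'⟩ | ⟨w', hw'⟩
        · left; rw [key, h0, mul_zero]
        · right; left
          exact ⟨t :: w', by rw [key, hw']; simp [mul_assoc]⟩
        · right; right
          exact ⟨t :: w', by rw [key, hw']; simp [mul_assoc]⟩
      · left
        simp [← mul_assoc, hzero s t hst hadj]

/-- Every product of factors each of the form `V s` or `(V s)*` either vanishes
or can be rewritten as `(V s₁ ⋯ V s_p) · (V t₁ ⋯ V t_q)*`. -/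
theorem words_normal_form {S A : Type*} [Fintype S]
    [NormedRing A] [StarRing A] [CStarRing A] [NormedAlgebra ℂ A]
    [StarModule ℂ A] [CompleteSpace A]
    (Γ : SimpleGraph S) (V : S → A) (hTA : SatisfiesToeplitzArtin Γ V)
    (L : List A) (hL : ∀ a ∈ L, ∃ s : S, a = V s ∨ a = star (V s)) :
    L.prod = 0 ∨
      ∃ w₁ w₂ : List S, L.prod = (w₁.map V).prod * star ((w₂.map V).prod) := by
  induction L with
  | nil => exact Or.inr ⟨[], [], by simp⟩
  | cons a L ih =>
    obtain ⟨s, hs⟩ := hL a List.mem_cons_self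
    rcases ih (fun b hb => hL b (List.mem_cons_of_mem a hb)) with h0 | ⟨w₁, w₂, hw⟩
    · left; simp [h0]
    · rcases hs with hs | hs
      · right
        exact ⟨s :: w₁, w₂, by simp [hw, hs, mul_assoc]⟩
      · rcases star_mul_word Γ V hTA s w₁ with h0 | ⟨w', hw'⟩ | ⟨w', hw'⟩
        · left
          rw [List.prod_cons, hw, hs, ← mul_assoc, h0, zero_mul]
        · right
          exact ⟨w', w₂, by rw [List.prod_cons, hw, hs, ← mul_assoc, hw']⟩
        · right
          refine ⟨w', w₂ ++ [s], ?_⟩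
          rw [List.prod_cons, hw, hs, ← mul_assoc, hw', mul_assoc]
          congr 1
          simp [star_mul]
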